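/- Let p be a prime and (m_n)_{n≥1} a sequence of natural numbers with 0 ≤ m_n < p^{n!} − 1 and m_i ≡ m_j (mod p^{i!} − 1) whenever i < j. If the base-p digit sums f(m_n) are unbounded, then for every r ∈ ℕ* there exist s > r and k ∈ ℕ* such that the binomial coefficient C(m_s, k(p^{r!} − 1)) is not divisible by p. -/

import Mathlib

/-! Auxiliary machinery -/

/-- truncation of a digit list to total digit sum `c`, filling from the low end. -/
def dtrunc : List ℕ → ℕ → List ℕ
  | [], _ => []
  | d :: D, c => min d c :: dtrunc D (c - d)

/-- the "difference" digit list between truncation at `c'` and at `c`. -/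
def ddiff : List ℕ → ℕ → ℕ → List ℕ
  | [], _, _ => []
  | d :: D, c, c' => (min d c' - min d c) :: ddiff D (c - d) (c' - d)

lemma ddiff_getD_le (D : List ℕ) : ∀ c c' i, (ddiff D c c').getD i 0 ≤ D.getD i 0 := by
  induction D with
  | nil => intro c c' i; simp [ddiff]
  | cons d D ih =>
    intro c c' i
    cases i with
    | zero => simp only [ddiff, List.getD_cons_zero]; omega
    | succ i => simpa [ddiff] using ih (c - d) (c' - d) i

lemma ddiff_mem_lt {p : ℕ} (D : List ℕ) (hD : ∀ x ∈ D, x < p) :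
    ∀ c c', ∀ x ∈ ddiff D c c', x < p := by
  induction D with
  | nil => intro c c' x hx; simp [ddiff] at hx
  | cons d D ih =>
    intro c c' x hx
    simp only [ddiff, List.mem_cons] at hx
    rcases hx with rfl | hx
    · have : d < p := hD d (by simp)
      omega
    · exact ih (fun y hy => hD y (by simp [hy])) _ _ x hx

lemma ddiff_sum (D : List ℕ) : ∀ c c', c ≤ c' →
    (ddiff D c c').sum = min D.sum c' - min D.sum c := by
  induction D with
  | nil => intro c c' h; simp [ddiff]
  | cons d D ih =>
    intro c c' h
    have := ih (c - d) (c' - d) (by omega)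
    simp only [ddiff, List.sum_cons, this]
    omega

lemma dtrunc_add_ddiff (p : ℕ) (D : List ℕ) : ∀ c c', c ≤ c' →
    Nat.ofDigits p (dtrunc D c) + Nat.ofDigits p (ddiff D c c')
      = Nat.ofDigits p (dtrunc D c') := by
  induction D with
  | nil => intro c c' h; simp [dtrunc, ddiff]
  | cons d D ih =>
    intro c c' h
    have key := ih (c - d) (c' - d) (by omega)
    simp only [dtrunc, ddiff, Nat.ofDigits_cons]
    have hmin : min d c ≤ min d c' := by omega
    have hmul : p * Nat.ofDigits p (dtrunc D (c - d)) + p * Nat.ofDigits p (ddiff D (c - d) (c' - d))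
        = p * Nat.ofDigits p (dtrunc D (c' - d)) := by
      rw [← Nat.mul_add, key]
    omega

lemma sum_le_ofDigits (p : ℕ) (hp : 1 ≤ p) : ∀ L : List ℕ, L.sum ≤ Nat.ofDigits p L := by
  intro L
  induction L with
  | nil => simp
  | cons d L ih =>
    simp only [List.sum_cons, Nat.ofDigits_cons]
    have : L.sum ≤ p * Nat.ofDigits p L :=
      le_trans ih (Nat.le_mul_of_pos_left _ (by omega))
    omega

lemma ofDigits_div_pow_mod (p : ℕ) (hp : 2 ≤ p) :
    ∀ (L : List ℕ), (∀ x ∈ L, x < p) → ∀ i, Nat.ofDigits p L / p ^ i % p = L.getD i 0 := by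
  intro L
  induction L with
  | nil => intro _ i; simp
  | cons d L ih =>
    intro hL i
    have hd : d < p := hL d (by simp)
    cases i with
    | zero =>
      simp only [pow_zero, Nat.div_one, Nat.ofDigits_cons, List.getD_cons_zero]
      rw [Nat.add_mul_mod_self_left, Nat.mod_eq_of_lt hd]
    | succ i =>
      have hstep : Nat.ofDigits p (d :: L) / p = Nat.ofDigits p L := by
        rw [Nat.ofDigits_cons, Nat.add_mul_div_left _ _ (by omega : 0 < p),
          Nat.div_eq_of_lt hd, Nat.zero_add]
      rw [pow_succ', ← Nat.div_div_eq_div_mul, hstep]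
      simpa using ih (fun y hy => hL y (by simp [hy])) i

lemma getD_lt_of_mem_lt {p : ℕ} (hp : 0 < p) (D : List ℕ) (h : ∀ x ∈ D, x < p) (i : ℕ) :
    D.getD i 0 < p := by
  rcases lt_or_ge i D.length with h' | h'
  · rw [List.getD_eq_getElem _ _ h']; exact h _ (List.getElem_mem _)
  · rw [List.getD_eq_default _ _ h']; exact hp

/-- Digit-domination criterion (via Lucas): if every base-`p` digit of `k` is at most the
corresponding digit of `n`, then `p ∤ C(n, k)`. -/
lemma not_dvd_choose_of_digit_le (p : ℕ) (hp : p.Prime) (k : ℕ) :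
    ∀ n, (∀ i, k / p ^ i % p ≤ n / p ^ i % p) → ¬ p ∣ Nat.choose n k := by
  haveI : Fact p.Prime := ⟨hp⟩
  induction k using Nat.strong_induction_on with
  | _ k ih =>
    intro n h hdvd
    rcases Nat.eq_zero_or_pos k with rfl | hk
    · rw [Nat.choose_zero_right, Nat.dvd_one] at hdvd
      exact hp.one_lt.ne' hdvd
    · have step := Choose.choose_modEq_choose_mod_mul_choose_div_nat (p := p) (n := n) (k := k)
      have hd2 : p ∣ Nat.choose (n % p) (k % p) * Nat.choose (n / p) (k / p) :=
        (Nat.modEq_zero_iff_dvd).1 (step.symm.trans ((Nat.modEq_zero_iff_dvd).2 hdvd))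
      rcases hp.dvd_mul.mp hd2 with h1 | h2
      · have hle : k % p ≤ n % p := by simpa using h 0
        have hfac : p ∣ (n % p).factorial := by
          refine h1.trans ?_
          exact ⟨(k % p).factorial * ((n % p) - (k % p)).factorial, by
            rw [← mul_assoc, Nat.choose_mul_factorial_mul_factorial hle]⟩
        have := (Nat.Prime.dvd_factorial hp).1 hfac
        have : n % p < p := Nat.mod_lt _ hp.pos
        omega
      · refine ih (k / p) (Nat.div_lt_self hk hp.one_lt) (n / p) (fun i => ?_) h2
        rw [Nat.div_div_eq_div_mul, Nat.div_div_eq_div_mul, ← pow_succ']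
        exact h (i + 1)

lemma digits_length_le (p m n : ℕ) (hp : 1 < p) (h : m < p ^ n) :
    (Nat.digits p m).length ≤ n := by
  rcases Nat.eq_zero_or_pos m with rfl | hm
  · simp
  · rw [Nat.digits_len p m hp (by omega)]
    have : Nat.log p m < n := (Nat.log_lt_iff_lt_pow hp (by omega)).2 h
    omega

/-- If a compatible sequence `(m_n)` (with `m_n < p^{n!} - 1` and `m_i ≡ m_j (mod p^{i!} - 1)`
for `i < j`) has unbounded base-`p` digit sums, then for every `r ≥ 1` there exist `s > r`
and `k ≥ 1` with `p ∤ C(m_s, k(p^{r!} - 1))`. -/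
theorem unbounded_digitSum_choose (p : ℕ) (hp : p.Prime) (m : ℕ → ℕ)
    (hlt : ∀ n, 1 ≤ n → m n < p ^ (Nat.factorial n) - 1)
    (hcomp : ∀ i j, 1 ≤ i → i < j → m j ≡ m i [MOD p ^ (Nat.factorial i) - 1])
    (hub : ∀ C : ℕ, ∃ n, 1 ≤ n ∧ C < (Nat.digits p (m n)).sum) :
    ∀ r, 1 ≤ r → ∃ s, r < s ∧ ∃ k, 1 ≤ k ∧
      ¬ p ∣ Nat.choose (m s) (k * (p ^ (Nat.factorial r) - 1)) := by
  intro r hr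
  have hp2 : 2 ≤ p := hp.two_le
  set q : ℕ := p ^ r.factorial - 1 with hq
  have hrf : 1 ≤ r.factorial := Nat.one_le_iff_ne_zero.2 (Nat.factorial_ne_zero r)
  have hpq : 2 ≤ p ^ r.factorial := le_trans hp2 (Nat.le_self_pow (by omega) p)
  have hq1 : 1 ≤ q := by omega
  obtain ⟨s, hs1, hsum⟩ := hub (q + (p - 1) * r.factorial)
  set D : List ℕ := Nat.digits p (m s) with hD
  set S : ℕ := D.sum with hS
  have hDlt : ∀ x ∈ D, x < p := fun x hx => Nat.digits_lt_base hp.one_lt hx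
  -- s > r
  have hrs : r < s := by
    by_contra hcon
    push_neg at hcon
    have hms : m s < p ^ r.factorial := by
      have h1 := hlt s hs1
      have h2 : p ^ s.factorial ≤ p ^ r.factorial :=
        Nat.pow_le_pow_right (by omega) (Nat.factorial_le hcon)
      omega
    have hlen : D.length ≤ r.factorial := digits_length_le p (m s) r.factorial hp.one_lt hms
    have hsle : S ≤ D.length * (p - 1) := by
      have := List.sum_le_card_nsmul D (p - 1) (fun x hx => by have := hDlt x hx; omega)
      simpa using this
    have h3 : S ≤ r.factorial * (p - 1) := le_trans hsle (Nat.mul_le_mul_right _ hlen)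
    rw [Nat.mul_comm] at h3
    omega
  -- pigeonhole on truncation values mod q
  haveI : NeZero q := ⟨by omega⟩
  have hcard : Fintype.card (ZMod q) < Fintype.card (Fin (S + 1)) := by
    rw [ZMod.card, Fintype.card_fin]
    omega
  obtain ⟨a, b, hab, hfeq⟩ := Fintype.exists_ne_map_eq_of_card_lt
    (fun c : Fin (S + 1) => ((Nat.ofDigits p (dtrunc D c) : ℕ) : ZMod q)) hcard
  -- WLOG a < b
  wlog hlt' : (a : ℕ) < (b : ℕ) generalizing a b
  · exact this b a hab.symm hfeq.symm (by
      have : (a : ℕ) ≠ (b : ℕ) := fun h => hab (Fin.ext h)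
      omega)
  set va := Nat.ofDigits p (dtrunc D (a : ℕ)) with hva
  set t := Nat.ofDigits p (ddiff D (a : ℕ) (b : ℕ)) with ht
  have hadd : va + t = Nat.ofDigits p (dtrunc D (b : ℕ)) :=
    dtrunc_add_ddiff p D _ _ (le_of_lt hlt')
  have htz : ((t : ℕ) : ZMod q) = 0 := by
    have : ((va : ℕ) : ZMod q) = ((va + t : ℕ) : ZMod q) := by
      rw [hadd]; exact hfeq
    push_cast at this
    linear_combination -this
  have hqt : q ∣ t := (ZMod.natCast_eq_zero_iff _ _).1 htz
  have htpos : 0 < t := by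
    have hsum' : (ddiff D (a : ℕ) (b : ℕ)).sum = min S (b : ℕ) - min S (a : ℕ) :=
      ddiff_sum D _ _ (le_of_lt hlt')
    have hb : (b : ℕ) ≤ S := by omega
    have : 0 < (ddiff D (a : ℕ) (b : ℕ)).sum := by omega
    exact lt_of_lt_of_le this (sum_le_ofDigits p (by omega) _)
  obtain ⟨k, hk⟩ := hqt
  have hk1 : 1 ≤ k := by
    rcases Nat.eq_zero_or_pos k with rfl | h
    · omega
    · exact h
  refine ⟨s, hrs, k, hk1, ?_⟩
  have hkq : k * q = t := by rw [Nat.mul_comm]; exact hk.symm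
  rw [hkq]
  refine not_dvd_choose_of_digit_le p hp t (m s) (fun i => ?_)
  have h1 : t / p ^ i % p = (ddiff D (a : ℕ) (b : ℕ)).getD i 0 :=
    ofDigits_div_pow_mod p hp2 _ (ddiff_mem_lt D hDlt _ _) i
  have h2 : m s / p ^ i % p = D.getD i 0 := by
    conv_lhs => rw [← Nat.ofDigits_digits p (m s)]
    exact ofDigits_div_pow_mod p hp2 D hDlt i
  rw [h1, h2]
  exact ddiff_getD_le D _ _ i
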